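/- arXiv:2305.10259 — 2 statements merged into one kernel-verified Lean document; each statement's English description precedes it below -/
import Mathlib

section
/- For the SEMO without reevaluation on OneMinMax under one-bit noise with rate p ∈ [0,1], almost surely, for every t ≥ 0 one has V_t(P_t) ⊆ V_{t+1}(P_{t+1}), where V_t(P_t) denotes the set {V_t(x) : x ∈ P_t} of stored noisy first-coordinate values of the population. -/
open scoped ENNReal NNReal
open scoped Classical
open MeasureTheory

noncomputable section

/-- The search space `{0,1}^n`. -/
abbrev Pt (n : ℕ) := Fin n → Bool

/-- The OneMax value: number of one-bits. -/
def fval {n : ℕ} (x : Pt n) : ℕ := (Finset.univ.filter fun i => x i = true).card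

/-- The OneMinMax objective `g(x) = (f(x), n - f(x))`. -/
def gval {n : ℕ} (x : Pt n) : ℕ × ℕ := (fval x, n - fval x)

/-- Weak Pareto dominance on `ℕ × ℕ`. -/
def domLe (a b : ℕ × ℕ) : Prop := a.1 ≤ b.1 ∧ a.2 ≤ b.2

/-- Strict Pareto dominance on `ℕ × ℕ`. -/
def domLt (a b : ℕ × ℕ) : Prop := domLe a b ∧ a ≠ b

/-- Flip bit `i` of `x`. -/
def flipBit {n : ℕ} (x : Pt n) (i : Fin n) : Pt n := Function.update x i (!x i)

/-- One-bit mutation: flip one uniformly chosen bit. -/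
def mutate {n : ℕ} (x : Pt n) : PMF (Pt n) :=
  if h : (Finset.univ : Finset (Fin n)).Nonempty then
    (PMF.uniformOfFinset Finset.univ h).map (flipBit x)
  else PMF.pure x

/-- One-bit noise with rate `p`: with probability `p` a uniformly random bit is flipped. -/
def noisyPoint {n : ℕ} (p : ℝ≥0) (hp : p ≤ 1) (x : Pt n) : PMF (Pt n) :=
  (PMF.bernoulli p hp).bind fun b =>
    if b then mutate x else PMF.pure x

/-- The noisy objective value `g̃(x) = g(x̃)`. -/
def noisyG {n : ℕ} (p : ℝ≥0) (hp : p ≤ 1) (x : Pt n) : PMF (ℕ × ℕ) :=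
  (noisyPoint p hp x).map gval

/-- Probability of an event under a `PMF`. -/
def prEvent {α : Type*} (μ : PMF α) (E : Set α) : ℝ≥0∞ := μ.toOuterMeasure E

/-- Distribution of the state of a Markov chain at time `t`. -/
def iterDist {S : Type*} (init : PMF S) (step : S → PMF S) : ℕ → PMF S
  | 0 => init
  | t + 1 => (iterDist init step t).bind step

/-- `notHitBy step good t s` is the probability that starting from `s`, none of the
states at times `0, 1, …, t` satisfies `good`; i.e. `Pr[T > t]` for the hitting time `T`. -/
def notHitBy {S : Type*} (step : S → PMF S) (good : S → Prop) : ℕ → S → ℝ≥0∞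
  | 0 => fun s => if good s then 0 else 1
  | t + 1 => fun s => if good s then 0 else ∑' s', step s s' * notHitBy step good t s'

/-- Expected hitting time of `good`, via `E[T] = ∑_{t ≥ 0} Pr[T > t]`. -/
def expHit {S : Type*} (init : PMF S) (step : S → PMF S) (good : S → Prop) : ℝ≥0∞ :=
  ∑' t : ℕ, ∑' s, init s * notHitBy step good t s

/-- Law of the trajectory `(s_0, …, s_t)` of the Markov chain. -/
def trajPMF {S : Type*} (init : PMF S) (step : S → PMF S) : (t : ℕ) → PMF (Fin (t + 1) → S)
  | 0 => init.map fun s _ => s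
  | t + 1 => (trajPMF init step t).bind fun tr =>
      (step (tr (Fin.last t))).map fun s' => Fin.snoc tr s'

/-- Hitting time of `good` along a trajectory, valued in `ℕ∞`. -/
def hitTime {S : Type*} (good : S → Prop) (traj : ℕ → S) : ℕ∞ :=
  sInf ((fun t : ℕ => (t : ℕ∞)) '' {t | good (traj t)})

/-! ### SEMO without reevaluation -/

/-- State: population members together with their stored noisy objective values. -/
abbrev StateNR (n : ℕ) := Multiset (Pt n × (ℕ × ℕ))

/-- One iteration of the SEMO without reevaluation. -/
def stepNR {n : ℕ} (p : ℝ≥0) (hp : p ≤ 1) (P : StateNR n) : PMF (StateNR n) :=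
  if hP : P = 0 then PMF.pure P else
    (PMF.ofMultiset P hP).bind fun xv =>
      (mutate xv.1).bind fun x' =>
        (noisyG p hp x').map fun w =>
          if ∃ y ∈ P, domLt w y.2 then P
          else (x', w) ::ₘ P.filter fun y => ¬ domLe y.2 w

/-- Initialization: a single uniformly random point with an independent noisy evaluation. -/
def initNR (n : ℕ) (p : ℝ≥0) (hp : p ≤ 1) : PMF (StateNR n) :=
  (PMF.uniformOfFintype (Pt n)).bind fun x =>
    (noisyG p hp x).map fun w => ({(x, w)} : StateNR n)

/-- The set of stored noisy first-coordinate values `V(P)`. -/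
def VvalsNR {n : ℕ} (P : StateNR n) : Set ℕ := {v | ∃ y ∈ P, (y : Pt n × ℕ × ℕ).2.1 = v}

/-- Both extreme values `0` and `n` appear among the stored noisy first coordinates. -/
def goodExNR {n : ℕ} (P : StateNR n) : Prop := 0 ∈ VvalsNR P ∧ (n : ℕ) ∈ VvalsNR P

/-- The true OneMax values of the population cover the whole Pareto front `[0..n]`. -/
def fCoveredNR {n : ℕ} (P : StateNR n) : Prop :=
  {k : ℕ | ∃ y ∈ P, fval (y : Pt n × ℕ × ℕ).1 = k} = Set.Icc 0 n

/-! ### SEMO with reevaluation -/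

/-- State: a finite multiset of points. -/
abbrev StateR (n : ℕ) := Multiset (Pt n)

/-- The elimination procedure: process the elements of the list in order, drawing a fresh
noisy value for each, discarding an element if strictly dominated by a kept one, and
otherwise keeping it while removing the kept elements it dominates. -/
def elimAux {n : ℕ} (p : ℝ≥0) (hp : p ≤ 1) :
    List (Pt n) → Multiset (Pt n × (ℕ × ℕ)) → PMF (Multiset (Pt n × (ℕ × ℕ)))
  | [], kept => PMF.pure kept
  | x :: rest, kept =>
      (noisyG p hp x).bind fun w =>
        if ∃ y ∈ kept, domLt w (y : Pt n × ℕ × ℕ).2 then elimAux p hp rest kept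
        else elimAux p hp rest ((x, w) ::ₘ kept.filter fun y => ¬ domLe y.2 w)

/-- One iteration of the SEMO with reevaluation: uniform parent selection, one-bit
mutation, then elimination of `P ∪ {x'}` processed in a uniformly random order. -/
def stepR {n : ℕ} (p : ℝ≥0) (hp : p ≤ 1) (P : StateR n) : PMF (StateR n) :=
  if hP : P = 0 then PMF.pure P else
    (PMF.ofMultiset P hP).bind fun x =>
      (mutate x).bind fun x' =>
        (PMF.ofMultiset (↑((x' ::ₘ P).toList.permutations) : Multiset (List (Pt n)))
          (by
            simp only [ne_eq, Multiset.coe_eq_zero]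
            exact List.ne_nil_of_mem
              (List.mem_permutations.mpr (List.Perm.refl _)))).bind fun l =>
          (elimAux p hp l 0).map fun kept => kept.map Prod.fst

/-- Initialization: a single uniformly random point. -/
def initR (n : ℕ) : PMF (StateR n) :=
  (PMF.uniformOfFintype (Pt n)).map fun x => ({x} : Multiset (Pt n))

/-- The population contains members of true OneMax value `0` and of value `n`. -/
def goodExR {n : ℕ} (P : StateR n) : Prop :=
  (∃ x ∈ P, fval (x : Pt n) = 0) ∧ (∃ x ∈ P, fval (x : Pt n) = n)

/-- The true OneMax values of the population cover the whole Pareto front `[0..n]`. -/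
def fCoveredR {n : ℕ} (P : StateR n) : Prop :=
  {k : ℕ | ∃ x ∈ P, fval (x : Pt n) = k} = Set.Icc 0 n

/-- Number of distinct true OneMax values in the population. -/
def Lval {n : ℕ} (P : StateR n) : ℕ := (P.map fval).toFinset.card

/-- Append the all-zeros (resp. all-ones) string if no member has value 0 (resp. `n`). -/
def fixExtremes {n : ℕ} (P : StateR n) : StateR n :=
  let P1 := if ∃ x ∈ P, fval (x : Pt n) = 0 then P else ((fun _ => false) : Pt n) ::ₘ P
  if ∃ x ∈ P1, fval (x : Pt n) = n then P1 else ((fun _ => true) : Pt n) ::ₘ P1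

/-- One iteration of the `K`-extreme-values-keeping SEMO with reevaluation, with the
iteration counter as part of the state. -/
def stepK {n : ℕ} (p : ℝ≥0) (hp : p ≤ 1) (K : ℕ) (st : ℕ × StateR n) :
    PMF (ℕ × StateR n) :=
  (stepR p hp st.2).map fun Q => (st.1 + 1, if st.1 < K then fixExtremes Q else Q)


/-- Invariant: every stored value is of the form `(v, n - v)` with `v ≤ n`. -/
def InvNR {n : ℕ} (P : StateNR n) : Prop :=
  ∀ y ∈ P, ∃ v ≤ n, (y : Pt n × ℕ × ℕ).2 = (v, n - v)

lemma fval_le {n : ℕ} (x : Pt n) : fval x ≤ n := by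
  have := Finset.card_filter_le (Finset.univ : Finset (Fin n)) (fun i => x i = true)
  simpa [fval] using this

lemma noisyG_shape {n : ℕ} {p : ℝ≥0} {hp : p ≤ 1} {x : Pt n} {w : ℕ × ℕ}
    (hw : w ∈ (noisyG p hp x).support) : ∃ v ≤ n, w = (v, n - v) := by
  simp only [noisyG, PMF.support_map, Set.mem_image] at hw
  obtain ⟨y, -, rfl⟩ := hw
  exact ⟨fval y, fval_le y, rfl⟩

lemma stepNR_support_cases {n : ℕ} {p : ℝ≥0} {hp : p ≤ 1} {P P' : StateNR n}
    (h : P' ∈ (stepNR p hp P).support) :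
    P' = P ∨ ∃ x' : Pt n, ∃ w : ℕ × ℕ, (∃ v ≤ n, w = (v, n - v)) ∧
      P' = (x', w) ::ₘ P.filter fun y => ¬ domLe y.2 w := by
  unfold stepNR at h
  by_cases hP : P = 0
  · simp [hP] at h; left; simp [h, hP]
  · simp only [dif_neg hP, PMF.support_bind, PMF.support_map, Set.mem_iUnion,
      Set.mem_image] at h
    obtain ⟨xv, -, x', -, w, hw, rfl⟩ := h
    by_cases hdom : ∃ y ∈ P, domLt w y.2
    · left; simp [hdom]
    · right
      exact ⟨x', w, noisyG_shape hw, by simp [hdom]⟩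

lemma InvNR_step {n : ℕ} {p : ℝ≥0} {hp : p ≤ 1} {P P' : StateNR n}
    (hI : InvNR P) (h : P' ∈ (stepNR p hp P).support) : InvNR P' := by
  rcases stepNR_support_cases h with rfl | ⟨x', w, hw, rfl⟩
  · exact hI
  · intro y hy
    rcases Multiset.mem_cons.mp hy with rfl | hy
    · exact hw
    · exact hI y (Multiset.mem_of_mem_filter hy)

lemma InvNR_reach {n : ℕ} {p : ℝ≥0} {hp : p ≤ 1} :
    ∀ t : ℕ, ∀ P ∈ (iterDist (initNR n p hp) (stepNR p hp) t).support, InvNR P := by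
  intro t
  induction t with
  | zero =>
    intro P hP
    simp only [iterDist, initNR, PMF.support_bind, PMF.support_map, Set.mem_iUnion,
      Set.mem_image] at hP
    obtain ⟨x, -, w, hw, rfl⟩ := hP
    intro y hy
    rw [Multiset.mem_singleton] at hy
    subst hy
    exact noisyG_shape hw
  | succ t ih =>
    intro P hP
    simp only [iterDist, PMF.support_bind, Set.mem_iUnion] at hP
    obtain ⟨Q, hQ, hPQ⟩ := hP
    exact InvNR_step (ih Q hQ) hPQ

lemma vvals_mono {n : ℕ} {p : ℝ≥0} {hp : p ≤ 1} {P P' : StateNR n}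
    (hI : InvNR P) (h : P' ∈ (stepNR p hp P).support) : VvalsNR P ⊆ VvalsNR P' := by
  rcases stepNR_support_cases h with rfl | ⟨x', w, ⟨b, hb, rfl⟩, rfl⟩
  · exact subset_rfl
  · rintro v ⟨y, hy, hyv⟩
    by_cases hd : domLe y.2 (b, n - b)
    · obtain ⟨a, ha, hy2⟩ := hI y hy
      refine ⟨(x', (b, n - b)), Multiset.mem_cons_self _ _, ?_⟩
      rw [hy2] at hd hyv
      obtain ⟨h1, h2⟩ := hd
      simp only at h1 h2 hyv ⊢
      omega
    · exact ⟨y, Multiset.mem_cons_of_mem (Multiset.mem_filter.mpr ⟨hy, hd⟩), hyv⟩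

/-- for the SEMO without reevaluation, almost surely the set of stored noisy
first-coordinate values never shrinks: along the trajectories of the chain (i.e. for every
reachable state `P` at any time `t` and every possible successor `P'`), we have
`V_t(P_t) ⊆ V_{t+1}(P_{t+1})`. -/
theorem statement4 (n : ℕ) (hn : 1 ≤ n) (p : ℝ≥0) (hp : p ≤ 1) :
    ∀ t : ℕ, ∀ P P' : StateNR n,
      P ∈ (iterDist (initNR n p hp) (stepNR p hp) t).support →
      P' ∈ (stepNR p hp P).support →
      VvalsNR P ⊆ VvalsNR P' := by
  intro t P P' hP hP'
  exact vvals_mono (InvNR_reach t P hP) hP'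

end
end

section
/- For the SEMO without reevaluation on OneMinMax under one-bit noise with rate p ∈ [0,1], almost surely, for every t ≥ 0 and every k ∈ {0,...,n}, the population contains at most 3 members x with true OneMax value f(x) = k, i.e., |{x ∈ P_t : f(x) = k}| ≤ 3. -/
open scoped ENNReal NNReal
open scoped Classical
open MeasureTheory

noncomputable section

lemma fval_flipBit_bounds {n : ℕ} (x : Pt n) (i : Fin n) :
    fval x ≤ fval (flipBit x i) + 1 ∧ fval (flipBit x i) ≤ fval x + 1 := by
  have key : ∀ z : Pt n,
      ((Finset.univ.erase i).filter fun j => z j = true).card ≤ fval z ∧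
      fval z ≤ ((Finset.univ.erase i).filter fun j => z j = true).card + 1 := by
    intro z
    constructor
    · exact Finset.card_le_card (Finset.filter_subset_filter _ (Finset.erase_subset _ _))
    · have hsub : (Finset.univ.filter fun j => z j = true) ⊆
          insert i ((Finset.univ.erase i).filter fun j => z j = true) := by
        intro j hj
        rcases eq_or_ne j i with rfl | hne
        · exact Finset.mem_insert_self _ _
        · simp only [Finset.mem_filter] at hj
          exact Finset.mem_insert_of_mem (by simp [Finset.mem_erase, hne, hj.2])
      calc fval z ≤ _ := Finset.card_le_card hsub
        _ ≤ _ + 1 := Finset.card_insert_le _ _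
  have heq : ((Finset.univ.erase i).filter fun j => flipBit x i j = true) =
      ((Finset.univ.erase i).filter fun j => x j = true) := by
    apply Finset.filter_congr
    intro j hj
    simp only [Finset.mem_erase] at hj
    simp [flipBit, Function.update_of_ne hj.1]
  obtain ⟨h1, h2⟩ := key x
  obtain ⟨h3, h4⟩ := key (flipBit x i)
  rw [heq] at h3 h4
  omega

lemma mem_support_noisyPoint {n : ℕ} {p : ℝ≥0} {hp : p ≤ 1} {x y : Pt n}
    (h : y ∈ (noisyPoint p hp x).support) : y = x ∨ ∃ i, y = flipBit x i := by
  rw [noisyPoint, PMF.mem_support_bind_iff] at h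
  obtain ⟨b, -, hb⟩ := h
  cases b
  · simp only [if_neg Bool.false_ne_true, PMF.mem_support_pure_iff] at hb
    exact Or.inl hb
  · rw [if_pos rfl, mutate] at hb
    split_ifs at hb with hne
    · rw [PMF.mem_support_map_iff] at hb
      obtain ⟨i, -, hi⟩ := hb
      exact Or.inr ⟨i, hi.symm⟩
    · rw [PMF.mem_support_pure_iff] at hb
      exact Or.inl hb

lemma mem_support_noisyG {n : ℕ} {p : ℝ≥0} {hp : p ≤ 1} {x : Pt n} {w : ℕ × ℕ}
    (h : w ∈ (noisyG p hp x).support) :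
    w.2 = n - w.1 ∧ fval x ≤ w.1 + 1 ∧ w.1 ≤ fval x + 1 := by
  rw [noisyG, PMF.mem_support_map_iff] at h
  obtain ⟨y, hy, rfl⟩ := h
  refine ⟨rfl, ?_⟩
  rcases mem_support_noisyPoint hy with rfl | ⟨i, rfl⟩
  · simp [gval]
  · have := fval_flipBit_bounds x i
    simp only [gval]
    omega

/-- The invariant. -/
def InvP (n : ℕ) (P : StateNR n) : Prop :=
  (∀ y ∈ P, (y : Pt n × ℕ × ℕ).2.2 = n - y.2.1 ∧ fval y.1 ≤ y.2.1 + 1 ∧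
    y.2.1 ≤ fval y.1 + 1) ∧ (P.map Prod.snd).Nodup

lemma inv_step {n : ℕ} {p : ℝ≥0} {hp : p ≤ 1} {Q P : StateNR n}
    (hQ : InvP n Q) (h : P ∈ (stepNR p hp Q).support) : InvP n P := by
  rw [stepNR] at h
  split_ifs at h with hQ0
  · rw [PMF.mem_support_pure_iff] at h; exact h ▸ hQ
  · rw [PMF.mem_support_bind_iff] at h
    obtain ⟨xv, -, h⟩ := h
    rw [PMF.mem_support_bind_iff] at h
    obtain ⟨x', -, h⟩ := h
    rw [PMF.mem_support_map_iff] at h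
    obtain ⟨w, hw, rfl⟩ := h
    split_ifs with hdom
    · exact hQ
    · obtain ⟨hw2, hwb⟩ := mem_support_noisyG hw
      constructor
      · rintro y hy
        rcases Multiset.mem_cons.mp hy with rfl | hy
        · exact ⟨hw2, hwb⟩
        · exact hQ.1 y (Multiset.mem_of_mem_filter hy)
      · rw [Multiset.map_cons, Multiset.nodup_cons]
        constructor
        · intro hmem
          rw [Multiset.mem_map] at hmem
          obtain ⟨y, hy, hy2⟩ := hmem
          exact (Multiset.mem_filter.mp hy).2 (hy2 ▸ ⟨le_refl _, le_refl _⟩)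
        · exact Multiset.nodup_of_le
            (Multiset.map_le_map (Multiset.filter_le _ _)) hQ.2

lemma card_filter_le_aux {n : ℕ} {P : StateNR n} (h : InvP n P) (k : ℕ) :
    Multiset.card (P.filter fun y => fval (y : Pt n × ℕ × ℕ).1 = k) ≤ 3 := by
  set F := P.filter fun y => fval (y : Pt n × ℕ × ℕ).1 = k with hF
  have hFP : F ≤ P := Multiset.filter_le _ _
  have hsnd : (F.map Prod.snd).Nodup :=
    Multiset.nodup_of_le (Multiset.map_le_map hFP) h.2
  have hs : ((F.map Prod.snd).map Prod.fst).Nodup := by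
    refine Multiset.Nodup.map_on ?_ hsnd
    intro a ha b hb hab
    rw [Multiset.mem_map] at ha hb
    obtain ⟨y, hy, rfl⟩ := ha
    obtain ⟨z, hz, rfl⟩ := hb
    have h1 := (h.1 y (Multiset.mem_of_le hFP hy)).1
    have h2 := (h.1 z (Multiset.mem_of_le hFP hz)).1
    exact Prod.ext hab (by rw [h1, h2, hab])
  have hmem : ∀ v ∈ (F.map Prod.snd).map Prod.fst, v ∈ Finset.Icc (k - 1) (k + 1) := by
    intro v hv
    rw [Multiset.mem_map] at hv
    obtain ⟨a, ha, rfl⟩ := hv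
    rw [Multiset.mem_map] at ha
    obtain ⟨y, hy, rfl⟩ := ha
    have hb := (h.1 y (Multiset.mem_of_le hFP hy)).2
    have hk : fval y.1 = k := (Multiset.mem_filter.mp hy).2
    rw [Finset.mem_Icc]
    omega
  have hsub : ((F.map Prod.snd).map Prod.fst).toFinset ⊆ Finset.Icc (k - 1) (k + 1) := by
    intro v hv
    exact hmem v (Multiset.mem_toFinset.mp hv)
  have hcard : Multiset.card F = ((F.map Prod.snd).map Prod.fst).toFinset.card := by
    rw [Multiset.toFinset_card_of_nodup hs, Multiset.card_map, Multiset.card_map]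
  rw [hcard]
  calc ((F.map Prod.snd).map Prod.fst).toFinset.card
      ≤ (Finset.Icc (k - 1) (k + 1)).card := Finset.card_le_card hsub
    _ ≤ 3 := by rw [Nat.card_Icc]; omega


/-- for the SEMO without reevaluation, almost surely at every time `t` and
for every `k ∈ [0..n]`, the population contains at most `3` members of true OneMax
value `k`. -/
theorem statement6 (n : ℕ) (hn : 1 ≤ n) (p : ℝ≥0) (hp : p ≤ 1) :
    ∀ t : ℕ, ∀ P : StateNR n,
      P ∈ (iterDist (initNR n p hp) (stepNR p hp) t).support →
      ∀ k : ℕ, k ≤ n →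
        Multiset.card (P.filter fun y => fval (y : Pt n × ℕ × ℕ).1 = k) ≤ 3 := by
  have inv : ∀ t : ℕ, ∀ P : StateNR n,
      P ∈ (iterDist (initNR n p hp) (stepNR p hp) t).support → InvP n P := by
    intro t
    induction t with
    | zero =>
      intro P hP
      simp only [iterDist, initNR, PMF.mem_support_bind_iff,
        PMF.mem_support_map_iff] at hP
      obtain ⟨x, -, w, hw, rfl⟩ := hP
      obtain ⟨hw2, hwb⟩ := mem_support_noisyG hw
      constructor
      · intro y hy
        rw [Multiset.mem_singleton] at hy
        subst hy
        exact ⟨hw2, hwb⟩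
      · simp
    | succ t ih =>
      intro P hP
      simp only [iterDist, PMF.mem_support_bind_iff] at hP
      obtain ⟨Q, hQ, hP⟩ := hP
      exact inv_step (ih Q hQ) hP
  intro t P hP k _
  exact card_filter_le_aux (inv t P hP) k


end
end
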